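/- For t > 0, with g_c(t,y) = −J_0(√(t²−y²))/2 + ((t+y)/(2√(t²−y²))) I_1(√(t²−y²)) − (y²/(2(t²−y²)^{3/2})) (I_1 + J_1)(√(t²−y²)) + (t²/(4(t²−y²))) (I_0 + I_2 + J_0 − J_2)(√(t²−y²)), one has ∫_{−t}^{t} g_c(t,y) dy = e^{t} − 1 − t. -/

import Mathlib

open Real


/-- Modified Bessel function of the first kind, order 0. -/
noncomputable def besselI0 (r : ℝ) : ℝ :=
  ∑' k : ℕ, (r / 2) ^ (2 * k) / ((Nat.factorial k : ℝ)) ^ 2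

/-- Bessel function of the first kind, order 0. -/
noncomputable def besselJ0 (r : ℝ) : ℝ :=
  ∑' k : ℕ, (-1 : ℝ) ^ k * (r / 2) ^ (2 * k) / ((Nat.factorial k : ℝ)) ^ 2

/-- Modified Bessel function of the first kind, order 1. -/
noncomputable def besselI1 (r : ℝ) : ℝ :=
  ∑' k : ℕ, (r / 2) ^ (2 * k + 1) / ((Nat.factorial k : ℝ) * (Nat.factorial (k + 1)))

/-- Bessel function of the first kind, order 1. -/
noncomputable def besselJ1 (r : ℝ) : ℝ :=
  ∑' k : ℕ, (-1 : ℝ) ^ k * (r / 2) ^ (2 * k + 1) / ((Nat.factorial k : ℝ) * (Nat.factorial (k + 1)))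

/-- Modified Bessel function of the first kind, order 2. -/
noncomputable def besselI2 (r : ℝ) : ℝ :=
  ∑' k : ℕ, (r / 2) ^ (2 * k + 2) / ((Nat.factorial k : ℝ) * (Nat.factorial (k + 2)))

/-- Bessel function of the first kind, order 2. -/
noncomputable def besselJ2 (r : ℝ) : ℝ :=
  ∑' k : ℕ, (-1 : ℝ) ^ k * (r / 2) ^ (2 * k + 2) / ((Nat.factorial k : ℝ) * (Nat.factorial (k + 2)))

open intervalIntegral
section ErlangAux

lemma summable_master (v C : ℝ) (hv : 0 ≤ v) (c : ℕ → ℝ)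
    (hc : ∀ k, |c k| ≤ C / (Nat.factorial k)) :
    Summable fun k => c k * v ^ k := by
  apply Summable.of_abs
  apply Summable.of_nonneg_of_le (fun k => abs_nonneg _) (fun k => ?_)
    ((Real.summable_pow_div_factorial v).mul_left C)
  rw [abs_mul, abs_pow, abs_of_nonneg hv]
  calc |c k| * v ^ k ≤ (C / (Nat.factorial k)) * v ^ k := by
        apply mul_le_mul_of_nonneg_right (hc k) (pow_nonneg hv k)
    _ = C * (v ^ k / (Nat.factorial k)) := by ring

lemma summable_shape2 (v : ℝ) (hv : 0 ≤ v) (a : ℕ → ℝ) (d : ℕ → ℝ)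
    (ha : ∀ k, |a k| ≤ 2) (hd : ∀ k, (Nat.factorial k : ℝ) ≤ d k) (hd0 : ∀ k, 0 < d k) :
    Summable fun k => (a k / d k) * v ^ k := by
  apply summable_master v 2 hv
  intro k
  rw [abs_div, abs_of_pos (hd0 k)]
  exact div_le_div₀ (by norm_num) (ha k) (by exact_mod_cast (Nat.factorial_pos k)) (hd k)

lemma fact_one_le (k : ℕ) : (1:ℝ) ≤ (Nat.factorial k : ℝ) := by
  exact_mod_cast Nat.one_le_iff_ne_zero.mpr (Nat.factorial_ne_zero k)

lemma fact_mono {k m : ℕ} (h : k ≤ m) : (Nat.factorial k : ℝ) ≤ (Nat.factorial m : ℝ) := by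
  exact_mod_cast Nat.factorial_le h

lemma abs_neg_one_pow_le (k : ℕ) : |(-1:ℝ)^k| ≤ 2 := by
  rw [abs_pow, abs_neg, abs_one, one_pow]; norm_num

lemma abs_one_add_le (k : ℕ) : |1 + (-1:ℝ)^k| ≤ 2 := by
  calc |1 + (-1:ℝ)^k| ≤ |(1:ℝ)| + |(-1:ℝ)^k| := abs_add_le _ _
    _ ≤ 2 := by rw [abs_pow, abs_neg, abs_one, one_pow]; norm_num

lemma abs_one_sub_le (k : ℕ) : |1 - (-1:ℝ)^k| ≤ 2 := by
  calc |1 - (-1:ℝ)^k| ≤ |(1:ℝ)| + |(-1:ℝ)^k| := abs_sub _ _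
    _ ≤ 2 := by rw [abs_pow, abs_neg, abs_one, one_pow]; norm_num

noncomputable def qcoef (t : ℝ) (k : ℕ) (y : ℝ) : ℝ :=
  -(1/2) * (-1:ℝ)^k / (Nat.factorial k:ℝ)^2
  + (t+y) / (4 * ((Nat.factorial k:ℝ) * (Nat.factorial (k+1))))
  - y^2/16 * ((1+(-1:ℝ)^(k+1))/((Nat.factorial (k+1):ℝ) * (Nat.factorial (k+2))))
  + t^2/16 * ((1+(-1:ℝ)^(k+1))/((Nat.factorial (k+1):ℝ))^2
      + (1-(-1:ℝ)^k)/((Nat.factorial k:ℝ) * (Nat.factorial (k+2))))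

noncomputable def Qf (t : ℝ) (k : ℕ) (y : ℝ) : ℝ :=
  (if k = 0 then (1/2:ℝ) else 0) + qcoef t k y * ((t^2-y^2)/4)^k

lemma abs_div_le' (a b C f : ℝ) (ha : |a| ≤ C) (hf : 0 < f) (hb : f ≤ b) : |a / b| ≤ C / f := by
  rw [abs_div, abs_of_pos (lt_of_lt_of_le hf hb)]
  exact div_le_div₀ (le_trans (abs_nonneg a) ha) ha hf hb

lemma qcoef_bound (t : ℝ) (k : ℕ) (y : ℝ) (hy : |y| ≤ t) :
    |qcoef t k y| ≤ (2*(1+t+t^2)) / (Nat.factorial k : ℝ) := by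
  have ht0 : 0 ≤ t := le_trans (abs_nonneg y) hy
  have f1 := fact_one_le k
  have f2 := fact_one_le (k+1)
  have f3 := fact_one_le (k+2)
  have g1 : (Nat.factorial k : ℝ) ≤ Nat.factorial (k+1) := fact_mono (by omega)
  have g2 : (Nat.factorial k : ℝ) ≤ Nat.factorial (k+2) := fact_mono (by omega)
  have hfk : (0:ℝ) < Nat.factorial k := by positivity
  have hy2 : y^2 ≤ t^2 := by have := abs_le.mp hy; nlinarith
  have hb1 : |-(1/2) * (-1:ℝ)^k / (Nat.factorial k:ℝ)^2| ≤ (1/2) / (Nat.factorial k : ℝ) := by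
    apply abs_div_le' _ _ _ _ ?_ hfk (by nlinarith)
    rw [abs_mul, abs_neg, abs_pow, abs_neg, abs_one, one_pow, mul_one,
      abs_of_pos (by norm_num : (0:ℝ) < 1/2)]
  have hb2 : |(t+y) / (4 * ((Nat.factorial k:ℝ) * (Nat.factorial (k+1))))|
      ≤ (2*t) / (Nat.factorial k : ℝ) := by
    apply abs_div_le' _ _ _ _ ?_ hfk (by nlinarith)
    have := abs_le.mp hy
    rw [abs_le]; constructor <;> linarith
  have hc3 : |(1+(-1:ℝ)^(k+1))/((Nat.factorial (k+1):ℝ) * (Nat.factorial (k+2)))|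
      ≤ 2 / (Nat.factorial k : ℝ) :=
    abs_div_le' _ _ _ _ (abs_one_add_le _) hfk (by nlinarith)
  have hc4 : |(1+(-1:ℝ)^(k+1))/((Nat.factorial (k+1):ℝ))^2| ≤ 2 / (Nat.factorial k : ℝ) :=
    abs_div_le' _ _ _ _ (abs_one_add_le _) hfk (by nlinarith)
  have hc5 : |(1-(-1:ℝ)^k)/((Nat.factorial k:ℝ) * (Nat.factorial (k+2)))| ≤ 2 / (Nat.factorial k : ℝ) :=
    abs_div_le' _ _ _ _ (abs_one_sub_le _) hfk (by nlinarith)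
  have hb3 : |y^2/16 * ((1+(-1:ℝ)^(k+1))/((Nat.factorial (k+1):ℝ) * (Nat.factorial (k+2))))|
      ≤ (t^2/8) / (Nat.factorial k : ℝ) := by
    rw [abs_mul]
    calc |y^2/16| * |(1+(-1:ℝ)^(k+1))/((Nat.factorial (k+1):ℝ) * (Nat.factorial (k+2)))|
        ≤ (t^2/16) * (2 / (Nat.factorial k : ℝ)) := by
          apply mul_le_mul ?_ hc3 (abs_nonneg _) (by positivity)
          rw [abs_of_nonneg (by positivity)]
          linarith
      _ = (t^2/8) / (Nat.factorial k : ℝ) := by ring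
  have hb4 : |t^2/16 * ((1+(-1:ℝ)^(k+1))/((Nat.factorial (k+1):ℝ))^2
      + (1-(-1:ℝ)^k)/((Nat.factorial k:ℝ) * (Nat.factorial (k+2))))|
      ≤ (t^2/4) / (Nat.factorial k : ℝ) := by
    rw [abs_mul, abs_of_nonneg (by positivity : (0:ℝ) ≤ t^2/16)]
    calc t^2/16 * |(1+(-1:ℝ)^(k+1))/((Nat.factorial (k+1):ℝ))^2
        + (1-(-1:ℝ)^k)/((Nat.factorial k:ℝ) * (Nat.factorial (k+2)))|
        ≤ t^2/16 * (2 / (Nat.factorial k : ℝ) + 2 / (Nat.factorial k : ℝ)) := by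
          apply mul_le_mul_of_nonneg_left ((abs_add_le _ _).trans (add_le_add hc4 hc5)) (by positivity)
      _ = (t^2/4) / (Nat.factorial k : ℝ) := by ring
  have heq : qcoef t k y = -(1/2) * (-1:ℝ)^k / (Nat.factorial k:ℝ)^2
      + (t+y) / (4 * ((Nat.factorial k:ℝ) * (Nat.factorial (k+1))))
      - y^2/16 * ((1+(-1:ℝ)^(k+1))/((Nat.factorial (k+1):ℝ) * (Nat.factorial (k+2))))
      + t^2/16 * ((1+(-1:ℝ)^(k+1))/((Nat.factorial (k+1):ℝ))^2
          + (1-(-1:ℝ)^k)/((Nat.factorial k:ℝ) * (Nat.factorial (k+2)))) := rfl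
  rw [heq]
  calc |(-(1/2) * (-1:ℝ)^k / (Nat.factorial k:ℝ)^2
      + (t+y) / (4 * ((Nat.factorial k:ℝ) * (Nat.factorial (k+1))))
      - y^2/16 * ((1+(-1:ℝ)^(k+1))/((Nat.factorial (k+1):ℝ) * (Nat.factorial (k+2)))))
      + t^2/16 * ((1+(-1:ℝ)^(k+1))/((Nat.factorial (k+1):ℝ))^2
          + (1-(-1:ℝ)^k)/((Nat.factorial k:ℝ) * (Nat.factorial (k+2))))|
      ≤ |(-(1/2) * (-1:ℝ)^k / (Nat.factorial k:ℝ)^2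
      + (t+y) / (4 * ((Nat.factorial k:ℝ) * (Nat.factorial (k+1))))
      - y^2/16 * ((1+(-1:ℝ)^(k+1))/((Nat.factorial (k+1):ℝ) * (Nat.factorial (k+2)))))|
      + |t^2/16 * ((1+(-1:ℝ)^(k+1))/((Nat.factorial (k+1):ℝ))^2
          + (1-(-1:ℝ)^k)/((Nat.factorial k:ℝ) * (Nat.factorial (k+2))))| := abs_add_le _ _
    _ ≤ (|(-(1/2) * (-1:ℝ)^k / (Nat.factorial k:ℝ)^2
      + (t+y) / (4 * ((Nat.factorial k:ℝ) * (Nat.factorial (k+1)))))|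
      + |y^2/16 * ((1+(-1:ℝ)^(k+1))/((Nat.factorial (k+1):ℝ) * (Nat.factorial (k+2))))|)
      + |t^2/16 * ((1+(-1:ℝ)^(k+1))/((Nat.factorial (k+1):ℝ))^2
          + (1-(-1:ℝ)^k)/((Nat.factorial k:ℝ) * (Nat.factorial (k+2))))| :=
        add_le_add_left (abs_sub _ _) _
    _ ≤ ((|-(1/2) * (-1:ℝ)^k / (Nat.factorial k:ℝ)^2|
      + |(t+y) / (4 * ((Nat.factorial k:ℝ) * (Nat.factorial (k+1))))|)
      + |y^2/16 * ((1+(-1:ℝ)^(k+1))/((Nat.factorial (k+1):ℝ) * (Nat.factorial (k+2))))|)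
      + |t^2/16 * ((1+(-1:ℝ)^(k+1))/((Nat.factorial (k+1):ℝ))^2
          + (1-(-1:ℝ)^k)/((Nat.factorial k:ℝ) * (Nat.factorial (k+2))))| :=
        add_le_add_left (add_le_add_left (abs_add_le _ _) _) _
    _ ≤ (((1/2) / (Nat.factorial k : ℝ) + (2*t) / (Nat.factorial k : ℝ))
        + (t^2/8) / (Nat.factorial k : ℝ)) + (t^2/4) / (Nat.factorial k : ℝ) :=
        add_le_add (add_le_add (add_le_add hb1 hb2) hb3) hb4
    _ ≤ (2*(1+t+t^2)) / (Nat.factorial k : ℝ) := by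
        rw [← add_div, ← add_div, ← add_div]
        exact (div_le_div_iff_of_pos_right hfk).mpr (by nlinarith)

set_option maxHeartbeats 4000000 in
lemma pointwise_id (t : ℝ) (y : ℝ) (hy : y ∈ Set.Ioo (-t) t) :
    -besselJ0 (Real.sqrt (t ^ 2 - y ^ 2)) / 2 +
        (t + y) / (2 * Real.sqrt (t ^ 2 - y ^ 2)) * besselI1 (Real.sqrt (t ^ 2 - y ^ 2)) -
        y ^ 2 / (2 * (t ^ 2 - y ^ 2) ^ ((3 : ℝ) / 2)) *
          (besselI1 (Real.sqrt (t ^ 2 - y ^ 2)) + besselJ1 (Real.sqrt (t ^ 2 - y ^ 2))) +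
        t ^ 2 / (4 * (t ^ 2 - y ^ 2)) *
          (besselI0 (Real.sqrt (t ^ 2 - y ^ 2)) + besselI2 (Real.sqrt (t ^ 2 - y ^ 2)) +
            besselJ0 (Real.sqrt (t ^ 2 - y ^ 2)) - besselJ2 (Real.sqrt (t ^ 2 - y ^ 2)))
    = ∑' k : ℕ, Qf t k y := by
  obtain ⟨hy1, hy2⟩ := hy
  have hu : 0 < t ^ 2 - y ^ 2 := sub_pos.mpr (sq_lt_sq' hy1 hy2)
  have hrpos : 0 < Real.sqrt (t ^ 2 - y ^ 2) := Real.sqrt_pos.mpr hu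
  have hpow : (Real.sqrt (t ^ 2 - y ^ 2) / 2) ^ 2 = (t ^ 2 - y ^ 2) / 4 := by
    rw [div_pow, Real.sq_sqrt hu.le]; norm_num
  have hv : (0:ℝ) ≤ (t ^ 2 - y ^ 2) / 4 := by linarith
  -- summability of all the basic series
  have s1 : Summable fun k : ℕ => ((-1:ℝ)^k / ((Nat.factorial k : ℝ))^2) * ((t^2-y^2)/4)^k := by
    apply summable_shape2 _ hv _ _ abs_neg_one_pow_le (fun k => ?_) (fun k => by positivity)
    nlinarith [fact_one_le k]
  have s2 : Summable fun k : ℕ => ((1:ℝ) / ((Nat.factorial k : ℝ))^2) * ((t^2-y^2)/4)^k := by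
    apply summable_shape2 _ hv _ _ (fun k => by norm_num) (fun k => ?_) (fun k => by positivity)
    nlinarith [fact_one_le k]
  have s3 : Summable fun k : ℕ => ((1:ℝ) / ((Nat.factorial k : ℝ) * (Nat.factorial (k+1)))) * ((t^2-y^2)/4)^k := by
    apply summable_shape2 _ hv _ _ (fun k => by norm_num) (fun k => ?_) (fun k => by positivity)
    nlinarith [fact_one_le k, fact_one_le (k+1)]
  have s4 : Summable fun k : ℕ => ((-1:ℝ)^k / ((Nat.factorial k : ℝ) * (Nat.factorial (k+1)))) * ((t^2-y^2)/4)^k := by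
    apply summable_shape2 _ hv _ _ abs_neg_one_pow_le (fun k => ?_) (fun k => by positivity)
    nlinarith [fact_one_le k, fact_one_le (k+1)]
  have s5 : Summable fun k : ℕ => ((1:ℝ) / ((Nat.factorial k : ℝ) * (Nat.factorial (k+2)))) * ((t^2-y^2)/4)^k := by
    apply summable_shape2 _ hv _ _ (fun k => by norm_num) (fun k => ?_) (fun k => by positivity)
    nlinarith [fact_one_le k, fact_one_le (k+2)]
  have s6 : Summable fun k : ℕ => ((-1:ℝ)^k / ((Nat.factorial k : ℝ) * (Nat.factorial (k+2)))) * ((t^2-y^2)/4)^k := by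
    apply summable_shape2 _ hv _ _ abs_neg_one_pow_le (fun k => ?_) (fun k => by positivity)
    nlinarith [fact_one_le k, fact_one_le (k+2)]
  have sE3 : Summable fun k : ℕ => ((1+(-1:ℝ)^(k+1)) / ((Nat.factorial (k+1) : ℝ) * (Nat.factorial (k+2)))) * ((t^2-y^2)/4)^k := by
    apply summable_shape2 _ hv (fun k => 1+(-1:ℝ)^(k+1)) _ (fun k => abs_one_add_le (k+1)) (fun k => ?_) (fun k => by positivity)
    nlinarith [fact_one_le (k+1), fact_one_le (k+2), fact_mono (show k ≤ k+1 by omega)]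
  have sE4 : Summable fun k : ℕ => ((1+(-1:ℝ)^(k+1)) / ((Nat.factorial (k+1) : ℝ))^2) * ((t^2-y^2)/4)^k := by
    apply summable_shape2 _ hv (fun k => 1+(-1:ℝ)^(k+1)) _ (fun k => abs_one_add_le (k+1)) (fun k => ?_) (fun k => by positivity)
    nlinarith [fact_one_le (k+1), fact_mono (show k ≤ k+1 by omega)]
  have sE5 : Summable fun k : ℕ => ((1-(-1:ℝ)^k) / ((Nat.factorial k : ℝ) * (Nat.factorial (k+2)))) * ((t^2-y^2)/4)^k := by
    apply summable_shape2 _ hv _ _ abs_one_sub_le (fun k => ?_) (fun k => by positivity)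
    nlinarith [fact_one_le k, fact_one_le (k+2)]
  -- Bessel functions as power series in (t²-y²)/4
  have hJ0 : besselJ0 (Real.sqrt (t ^ 2 - y ^ 2))
      = ∑' k : ℕ, ((-1:ℝ)^k / ((Nat.factorial k : ℝ))^2) * ((t^2-y^2)/4)^k := by
    unfold besselJ0
    exact tsum_congr fun k => by rw [pow_mul, hpow]; ring
  have hI0 : besselI0 (Real.sqrt (t ^ 2 - y ^ 2))
      = ∑' k : ℕ, ((1:ℝ) / ((Nat.factorial k : ℝ))^2) * ((t^2-y^2)/4)^k := by
    unfold besselI0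
    exact tsum_congr fun k => by rw [pow_mul, hpow]; ring
  have hI1 : besselI1 (Real.sqrt (t ^ 2 - y ^ 2))
      = (Real.sqrt (t ^ 2 - y ^ 2) / 2) * ∑' k : ℕ, ((1:ℝ) / ((Nat.factorial k : ℝ) * (Nat.factorial (k+1)))) * ((t^2-y^2)/4)^k := by
    unfold besselI1
    rw [← tsum_mul_left]
    exact tsum_congr fun k => by rw [pow_succ, pow_mul, hpow]; ring
  have hJ1 : besselJ1 (Real.sqrt (t ^ 2 - y ^ 2))
      = (Real.sqrt (t ^ 2 - y ^ 2) / 2) * ∑' k : ℕ, ((-1:ℝ)^k / ((Nat.factorial k : ℝ) * (Nat.factorial (k+1)))) * ((t^2-y^2)/4)^k := by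
    unfold besselJ1
    rw [← tsum_mul_left]
    exact tsum_congr fun k => by rw [pow_succ, pow_mul, hpow]; ring
  have hI2 : besselI2 (Real.sqrt (t ^ 2 - y ^ 2))
      = ((t^2-y^2)/4) * ∑' k : ℕ, ((1:ℝ) / ((Nat.factorial k : ℝ) * (Nat.factorial (k+2)))) * ((t^2-y^2)/4)^k := by
    unfold besselI2
    rw [← tsum_mul_left]
    exact tsum_congr fun k => by
      rw [show 2*k+2 = 2*(k+1) by ring, pow_mul, hpow, pow_succ]; ring
  have hJ2 : besselJ2 (Real.sqrt (t ^ 2 - y ^ 2))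
      = ((t^2-y^2)/4) * ∑' k : ℕ, ((-1:ℝ)^k / ((Nat.factorial k : ℝ) * (Nat.factorial (k+2)))) * ((t^2-y^2)/4)^k := by
    unfold besselJ2
    rw [← tsum_mul_left]
    exact tsum_congr fun k => by
      rw [show 2*k+2 = 2*(k+1) by ring, pow_mul, hpow, pow_succ]; ring
  -- combined series identities
  have hS1 : (∑' k : ℕ, ((1:ℝ) / ((Nat.factorial k : ℝ) * (Nat.factorial (k+1)))) * ((t^2-y^2)/4)^k)
      + (∑' k : ℕ, ((-1:ℝ)^k / ((Nat.factorial k : ℝ) * (Nat.factorial (k+1)))) * ((t^2-y^2)/4)^k)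
      = 2 + ((t^2-y^2)/4) * ∑' k : ℕ, ((1+(-1:ℝ)^(k+1)) / ((Nat.factorial (k+1) : ℝ) * (Nat.factorial (k+2)))) * ((t^2-y^2)/4)^k := by
    rw [← Summable.tsum_add s3 s4]
    have hsum : Summable fun k : ℕ => ((1:ℝ) / ((Nat.factorial k : ℝ) * (Nat.factorial (k+1)))) * ((t^2-y^2)/4)^k
        + ((-1:ℝ)^k / ((Nat.factorial k : ℝ) * (Nat.factorial (k+1)))) * ((t^2-y^2)/4)^k := s3.add s4
    rw [Summable.tsum_eq_zero_add hsum]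
    congr 1
    · norm_num [Nat.factorial]
    · rw [← tsum_mul_left]
      exact tsum_congr fun k => by
        rw [show k+1+1 = k+2 from rfl, pow_succ]
        ring
  have hS4 : (∑' k : ℕ, ((1:ℝ) / ((Nat.factorial k : ℝ))^2) * ((t^2-y^2)/4)^k)
      + (∑' k : ℕ, ((-1:ℝ)^k / ((Nat.factorial k : ℝ))^2) * ((t^2-y^2)/4)^k)
      = 2 + ((t^2-y^2)/4) * ∑' k : ℕ, ((1+(-1:ℝ)^(k+1)) / ((Nat.factorial (k+1) : ℝ))^2) * ((t^2-y^2)/4)^k := by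
    rw [← Summable.tsum_add s2 s1, Summable.tsum_eq_zero_add (s2.add s1)]
    congr 1
    · norm_num [Nat.factorial]
    · rw [← tsum_mul_left]
      exact tsum_congr fun k => by
        rw [pow_succ]
        ring
  have hS5 : (∑' k : ℕ, ((1:ℝ) / ((Nat.factorial k : ℝ) * (Nat.factorial (k+2)))) * ((t^2-y^2)/4)^k)
      - (∑' k : ℕ, ((-1:ℝ)^k / ((Nat.factorial k : ℝ) * (Nat.factorial (k+2)))) * ((t^2-y^2)/4)^k)
      = ∑' k : ℕ, ((1-(-1:ℝ)^k) / ((Nat.factorial k : ℝ) * (Nat.factorial (k+2)))) * ((t^2-y^2)/4)^k := by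
    rw [← Summable.tsum_sub s5 s6]
    exact tsum_congr fun k => by ring
  -- RHS
  have hQ : ∑' k : ℕ, Qf t k y = 1/2 + ∑' k : ℕ, qcoef t k y * ((t^2-y^2)/4)^k := by
    have sQ : Summable fun k : ℕ => qcoef t k y * ((t^2-y^2)/4)^k := by
      apply summable_master _ (2*(1+t+t^2)) hv
      intro k
      apply qcoef_bound
      rw [abs_le]; constructor <;> linarith
    have sI : Summable fun k : ℕ => (if k = 0 then (1/2:ℝ) else 0) :=
      summable_of_ne_finset_zero (s := {0}) (fun k hk => by simp at hk; simp [hk])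
    unfold Qf
    rw [Summable.tsum_add sI sQ]
    congr 1
    exact tsum_ite_eq 0 (fun _ => (1/2:ℝ))
  have hsplit : ∑' k : ℕ, qcoef t k y * ((t^2-y^2)/4)^k
      = -(1/2) * (∑' k : ℕ, ((-1:ℝ)^k / ((Nat.factorial k : ℝ))^2) * ((t^2-y^2)/4)^k)
        + (t+y)/4 * (∑' k : ℕ, ((1:ℝ) / ((Nat.factorial k : ℝ) * (Nat.factorial (k+1)))) * ((t^2-y^2)/4)^k)
        + (-(y^2/16)) * (∑' k : ℕ, ((1+(-1:ℝ)^(k+1)) / ((Nat.factorial (k+1) : ℝ) * (Nat.factorial (k+2)))) * ((t^2-y^2)/4)^k)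
        + t^2/16 * ((∑' k : ℕ, ((1+(-1:ℝ)^(k+1)) / ((Nat.factorial (k+1) : ℝ))^2) * ((t^2-y^2)/4)^k)
          + (∑' k : ℕ, ((1-(-1:ℝ)^k) / ((Nat.factorial k : ℝ) * (Nat.factorial (k+2)))) * ((t^2-y^2)/4)^k)) := by
    rw [← tsum_mul_left, ← tsum_mul_left, ← tsum_mul_left, ← Summable.tsum_add sE4 sE5, ← tsum_mul_left,
      ← Summable.tsum_add (s1.mul_left _) (s3.mul_left _),
      ← Summable.tsum_add ((s1.mul_left _).add (s3.mul_left _)) (sE3.mul_left _),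
      ← Summable.tsum_add (((s1.mul_left _).add (s3.mul_left _)).add (sE3.mul_left _)) ((sE4.add sE5).mul_left _)]
    exact tsum_congr fun k => by unfold qcoef; ring
  -- put everything together
  rw [hJ0, hI0, hI1, hJ1, hI2, hJ2, hQ, hsplit]
  have hrw : (t ^ 2 - y ^ 2) ^ ((3:ℝ)/2) = (t ^ 2 - y ^ 2) * Real.sqrt (t ^ 2 - y ^ 2) := by
    rw [show ((3:ℝ)/2) = (1:ℝ) + (1/2 : ℝ) by norm_num, Real.rpow_add hu, Real.rpow_one,
      ← Real.sqrt_eq_rpow]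
  rw [hrw]
  set s := Real.sqrt (t ^ 2 - y ^ 2) with hs
  set E1 := ∑' k : ℕ, ((-1:ℝ)^k / ((Nat.factorial k : ℝ))^2) * ((t^2-y^2)/4)^k with hE1
  set E0 := ∑' k : ℕ, ((1:ℝ) / ((Nat.factorial k : ℝ))^2) * ((t^2-y^2)/4)^k with hE0
  set E2 := ∑' k : ℕ, ((1:ℝ) / ((Nat.factorial k : ℝ) * (Nat.factorial (k+1)))) * ((t^2-y^2)/4)^k with hE2
  set E2' := ∑' k : ℕ, ((-1:ℝ)^k / ((Nat.factorial k : ℝ) * (Nat.factorial (k+1)))) * ((t^2-y^2)/4)^k with hE2'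
  set E5 := ∑' k : ℕ, ((1:ℝ) / ((Nat.factorial k : ℝ) * (Nat.factorial (k+2)))) * ((t^2-y^2)/4)^k with hE5
  set E5' := ∑' k : ℕ, ((-1:ℝ)^k / ((Nat.factorial k : ℝ) * (Nat.factorial (k+2)))) * ((t^2-y^2)/4)^k with hE5'
  set F3 := ∑' k : ℕ, ((1+(-1:ℝ)^(k+1)) / ((Nat.factorial (k+1) : ℝ) * (Nat.factorial (k+2)))) * ((t^2-y^2)/4)^k with hF3
  set F4 := ∑' k : ℕ, ((1+(-1:ℝ)^(k+1)) / ((Nat.factorial (k+1) : ℝ))^2) * ((t^2-y^2)/4)^k with hF4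
  set F5 := ∑' k : ℕ, ((1-(-1:ℝ)^k) / ((Nat.factorial k : ℝ) * (Nat.factorial (k+2)))) * ((t^2-y^2)/4)^k with hF5
  clear_value s E1 E0 E2 E2' E5 E5' F3 F4 F5
  clear s1 s2 s3 s4 s5 s6 sE3 sE4 sE5 hE1 hE0 hE2 hE2' hE5 hE5' hF3 hF4 hF5
  clear hJ0 hI0 hI1 hJ1 hI2 hJ2 hQ hsplit hs hpow hrw hv hy1 hy2
  have hune : t ^ 2 - y ^ 2 ≠ 0 := hu.ne'
  have hsne : s ≠ 0 := hrpos.ne'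
  have hT2 : (t + y) / (2 * s) * (s / 2 * E2) = (t+y)/4 * E2 := by
    field_simp
    ring
  have hT3 : y ^ 2 / (2 * ((t ^ 2 - y ^ 2) * s)) * (s / 2 * E2 + s / 2 * E2')
      = y^2/(2*(t^2-y^2)) + y^2/16 * F3 := by
    have h : s / 2 * E2 + s / 2 * E2' = s / 2 * (2 + (t^2-y^2)/4 * F3) := by
      rw [← mul_add, hS1]
    rw [h]
    field_simp
    ring
  have hT4 : t ^ 2 / (4 * (t ^ 2 - y ^ 2)) * (E0 + (t^2-y^2)/4 * E5 + E1 - (t^2-y^2)/4 * E5')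
      = t^2/(2*(t^2-y^2)) + t^2/16 * (F4 + F5) := by
    have h : E0 + (t^2-y^2)/4 * E5 + E1 - (t^2-y^2)/4 * E5'
        = 2 + (t^2-y^2)/4 * F4 + (t^2-y^2)/4 * F5 := by
      linear_combination hS4 + ((t^2-y^2)/4) * hS5
    rw [h]
    field_simp
    ring
  rw [hT2, hT3, hT4]
  field_simp
  ring

lemma momV (t : ℝ) : ∀ k : ℕ, ∫ y in (-t)..t, ((t^2 - y^2)/4)^k
    = 2 * (Nat.factorial k : ℝ)^2 * t^(2*k+1) / (Nat.factorial (2*k+1)) := by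
  intro k
  induction k with
  | zero => simp [Nat.factorial]; ring
  | succ k ih =>
    have hderiv : ∀ y : ℝ, HasDerivAt (fun y : ℝ => y * ((t^2 - y^2)/4)^(k+1))
        ((2*k+3) * ((t^2-y^2)/4)^(k+1) - ((2*k+2)*(t^2/4)) * ((t^2-y^2)/4)^k) y := by
      intro y
      have h2 : HasDerivAt (fun y : ℝ => (t^2 - y^2)/4) (-(2*y)/4) y := by
        simpa using ((hasDerivAt_pow 2 y).const_sub (t^2)).div_const 4
      have h1 : HasDerivAt (fun y : ℝ => ((t^2 - y^2)/4)^(k+1)) (↑(k + 1) * ((t ^ 2 - y ^ 2) / 4) ^ (k + 1 - 1) * (-(2 * y) / 4)) y := h2.pow (k+1)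
      have := (hasDerivAt_id y).mul h1
      refine this.congr_deriv ?_
      simp only [Nat.add_sub_cancel, id_eq]
      push_cast
      ring
    have hcont : Continuous fun y : ℝ => ((2*k+3) * ((t^2-y^2)/4)^(k+1) - ((2*k+2)*(t^2/4)) * ((t^2-y^2)/4)^k) := by continuity
    have key := integral_eq_sub_of_hasDerivAt (a := -t) (b := t) (f := fun y : ℝ => y * ((t^2 - y^2)/4)^(k+1))
        (fun y _ => hderiv y) (hcont.intervalIntegrable _ _)
    have hz : (t * ((t^2 - t^2)/4)^(k+1) - (-t) * ((t^2 - (-t)^2)/4)^(k+1)) = 0 := by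
      simp [sub_self, neg_sq]
    rw [hz] at key
    have hi1 : IntervalIntegrable (fun y : ℝ => ((t^2-y^2)/4)^(k+1)) MeasureTheory.volume (-t) t :=
      (by continuity : Continuous fun y : ℝ => ((t^2-y^2)/4)^(k+1)).intervalIntegrable _ _
    have hi0 : IntervalIntegrable (fun y : ℝ => ((t^2-y^2)/4)^k) MeasureTheory.volume (-t) t :=
      (by continuity : Continuous fun y : ℝ => ((t^2-y^2)/4)^k).intervalIntegrable _ _
    rw [integral_sub ((hi1.const_mul _)) (hi0.const_mul _), integral_const_mul, integral_const_mul, ih] at key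
    have h3 : (2*(k:ℝ)+3) ≠ 0 := by positivity
    have e1 : ∫ y in (-t)..t, ((t^2 - y^2)/4)^(k+1)
        = ((2*k+2)*(t^2/4)) * (2 * (Nat.factorial k : ℝ)^2 * t^(2*k+1) / (Nat.factorial (2*k+1))) / (2*k+3) := by
      field_simp at key ⊢
      linarith [key]
    rw [e1]
    have hf1 : (Nat.factorial (2*(k+1)+1) : ℝ) = (2*k+3) * ((2*k+2) * (Nat.factorial (2*k+1))) := by
      have : 2*(k+1)+1 = (2*k+2)+1 := by ring
      rw [this, Nat.factorial_succ]
      have : 2*k+2 = (2*k+1)+1 := by ring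
      rw [this, Nat.factorial_succ]
      push_cast
      ring
    have hf2 : (Nat.factorial (k+1) : ℝ) = (k+1) * Nat.factorial k := by
      rw [Nat.factorial_succ]; push_cast; ring
    rw [hf1, hf2]
    have hne : (Nat.factorial (2*k+1) : ℝ) ≠ 0 := by positivity
    field_simp
    ring

lemma momOdd (t : ℝ) (k : ℕ) : ∫ y in (-t)..t, y * ((t^2 - y^2)/4)^k = 0 := by
  have hderiv : ∀ y : ℝ, HasDerivAt (fun y : ℝ => (-2/((k:ℝ)+1)) * ((t^2 - y^2)/4)^(k+1))
      (y * ((t^2-y^2)/4)^k) y := by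
    intro y
    have h2 : HasDerivAt (fun y : ℝ => (t^2 - y^2)/4) (-(2*y)/4) y := by
      simpa using ((hasDerivAt_pow 2 y).const_sub (t^2)).div_const 4
    have h1 := (show HasDerivAt (fun y : ℝ => ((t^2 - y^2)/4)^(k+1)) (↑(k + 1) * ((t ^ 2 - y ^ 2) / 4) ^ (k + 1 - 1) * (-(2 * y) / 4)) y from h2.pow (k+1)).const_mul (-2/((k:ℝ)+1))
    refine h1.congr_deriv ?_
    simp only [Nat.add_sub_cancel]
    have : ((k:ℝ)+1) ≠ 0 := by positivity
    field_simp
    push_cast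
    ring
  have key := integral_eq_sub_of_hasDerivAt (a := -t) (b := t) (fun y _ => hderiv y)
      ((by continuity : Continuous fun y : ℝ => y * ((t^2-y^2)/4)^k).intervalIntegrable _ _)
  rw [key]
  simp [neg_sq]

lemma sumVal (t : ℝ) :
    HasSum (fun k : ℕ => (if k = 0 then t else 0)
      + (-1:ℝ)^(k+1) * t^(2*k+1)/(Nat.factorial (2*k+1))
      + t^(2*k+2)/(Nat.factorial (2*k+2))
      + (1+(-1:ℝ)^(k+1)) * t^(2*k+3)/(Nat.factorial (2*k+3)))
    (Real.exp t - 1 - t) := by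
  have h1 : HasSum (fun k : ℕ => if k = 0 then t else 0) t := hasSum_ite_eq 0 t
  have h2 : HasSum (fun k : ℕ => (-1:ℝ)^(k+1) * t^(2*k+1)/(Nat.factorial (2*k+1))) (-Real.sin t) := by
    have hfe : (fun k : ℕ => (-1:ℝ)^(k+1) * t^(2*k+1)/(Nat.factorial (2*k+1)))
        = fun k : ℕ => -((-1:ℝ)^k * t^(2*k+1)/(Nat.factorial (2*k+1))) := by
      funext k; ring
    rw [hfe]; exact (Real.hasSum_sin t).neg
  have h3 : HasSum (fun k : ℕ => t^(2*k+2)/(Nat.factorial (2*k+2))) (Real.cosh t - 1) := by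
    have hfe : (fun n : ℕ => t^(2*(n+1))/(Nat.factorial (2*(n+1)) : ℝ))
        = fun n : ℕ => t^(2*n+2)/(Nat.factorial (2*n+2)) := by
      funext n; norm_num [mul_add]
    rw [← hfe, hasSum_nat_add_iff (f := fun n : ℕ => t^(2*n)/(Nat.factorial (2*n) : ℝ)) 1]
    simpa using Real.hasSum_cosh t
  have h4 : HasSum (fun k : ℕ => (1+(-1:ℝ)^(k+1)) * t^(2*k+3)/(Nat.factorial (2*k+3)))
      (Real.sinh t + Real.sin t - 2*t) := by
    have w : HasSum (fun n : ℕ => t^(2*n+1)/(Nat.factorial (2*n+1)) + (-1:ℝ)^n * t^(2*n+1)/(Nat.factorial (2*n+1)))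
        (Real.sinh t + Real.sin t) := (Real.hasSum_sinh t).add (Real.hasSum_sin t)
    have hfe : (fun n : ℕ => t^(2*(n+1)+1)/(Nat.factorial (2*(n+1)+1) : ℝ) + (-1:ℝ)^(n+1) * t^(2*(n+1)+1)/(Nat.factorial (2*(n+1)+1)))
        = fun k : ℕ => (1+(-1:ℝ)^(k+1)) * t^(2*k+3)/(Nat.factorial (2*k+3)) := by
      funext n
      have : 2*(n+1)+1 = 2*n+3 := by ring
      rw [this]; ring
    rw [← hfe, hasSum_nat_add_iff (f := fun n : ℕ => t^(2*n+1)/(Nat.factorial (2*n+1) : ℝ) + (-1:ℝ)^n * t^(2*n+1)/(Nat.factorial (2*n+1))) 1]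
    have : Real.sinh t + Real.sin t - 2*t + ∑ i ∈ Finset.range 1,
        (t^(2*i+1)/(Nat.factorial (2*i+1) : ℝ) + (-1:ℝ)^i * t^(2*i+1)/(Nat.factorial (2*i+1))) = Real.sinh t + Real.sin t := by
      simp [Nat.factorial]; ring
    rw [this]; exact w
  have := ((h1.add h2).add h3).add h4
  convert this using 1
  rw [← Real.cosh_add_sinh]
  ring

lemma momY2 (t : ℝ) (k : ℕ) : ∫ y in (-t)..t, y^2 * ((t^2 - y^2)/4)^k
    = t^2 * (2 * (Nat.factorial k : ℝ)^2 * t^(2*k+1) / (Nat.factorial (2*k+1)))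
      - 4 * (2 * (Nat.factorial (k+1) : ℝ)^2 * t^(2*(k+1)+1) / (Nat.factorial (2*(k+1)+1))) := by
  have hfe : (fun y : ℝ => y^2 * ((t^2 - y^2)/4)^k)
      = fun y : ℝ => t^2 * ((t^2-y^2)/4)^k - 4 * ((t^2-y^2)/4)^(k+1) := by
    funext y; ring
  rw [hfe, intervalIntegral.integral_sub (((by continuity : Continuous fun y : ℝ => ((t^2-y^2)/4)^k).intervalIntegrable _ _).const_mul _)
    (((by continuity : Continuous fun y : ℝ => ((t^2-y^2)/4)^(k+1)).intervalIntegrable _ _).const_mul _),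
    intervalIntegral.integral_const_mul, intervalIntegral.integral_const_mul, momV, momV]

set_option maxHeartbeats 2000000 in
lemma intQ (t : ℝ) (k : ℕ) : ∫ y in (-t)..t, Qf t k y
    = (if k = 0 then t else 0)
      + (-1:ℝ)^(k+1) * t^(2*k+1)/(Nat.factorial (2*k+1))
      + t^(2*k+2)/(Nat.factorial (2*k+2))
      + (1+(-1:ℝ)^(k+1)) * t^(2*k+3)/(Nat.factorial (2*k+3)) := by
  set A : ℝ := -(1/2) * (-1:ℝ)^k / (Nat.factorial k:ℝ)^2
    + t / (4 * ((Nat.factorial k:ℝ) * (Nat.factorial (k+1))))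
    + t^2/16 * ((1+(-1:ℝ)^(k+1))/((Nat.factorial (k+1):ℝ))^2
      + (1-(-1:ℝ)^k)/((Nat.factorial k:ℝ) * (Nat.factorial (k+2)))) with hA
  set B : ℝ := 1 / (4 * ((Nat.factorial k:ℝ) * (Nat.factorial (k+1)))) with hB
  set C : ℝ := -(1/16) * ((1+(-1:ℝ)^(k+1))/((Nat.factorial (k+1):ℝ) * (Nat.factorial (k+2)))) with hC
  have hfe : (fun y : ℝ => Qf t k y) = fun y : ℝ => (if k = 0 then (1/2:ℝ) else 0)
      + (A * ((t^2-y^2)/4)^k + B * (y * ((t^2-y^2)/4)^k) + C * (y^2 * ((t^2-y^2)/4)^k)) := by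
    funext y; simp only [Qf, qcoef, hA, hB, hC]; ring
  have c1 : Continuous fun y : ℝ => ((t^2-y^2)/4)^k := by continuity
  have c2 : Continuous fun y : ℝ => y * ((t^2-y^2)/4)^k := by continuity
  have c3 : Continuous fun y : ℝ => y^2 * ((t^2-y^2)/4)^k := by continuity
  have i1 := (c1.intervalIntegrable (μ := MeasureTheory.volume) (-t) t).const_mul A
  have i2 := (c2.intervalIntegrable (μ := MeasureTheory.volume) (-t) t).const_mul B
  have i3 := (c3.intervalIntegrable (μ := MeasureTheory.volume) (-t) t).const_mul C
  rw [hfe, intervalIntegral.integral_add (intervalIntegrable_const) ((i1.add i2).add i3),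
    intervalIntegral.integral_add (i1.add i2) i3,
    intervalIntegral.integral_add i1 i2,
    intervalIntegral.integral_const_mul, intervalIntegral.integral_const_mul,
    intervalIntegral.integral_const_mul, momV, momOdd, momY2, intervalIntegral.integral_const]
  have hif : (t - -t) • (if k = 0 then (1/2:ℝ) else 0) = (if k = 0 then t else 0) := by
    by_cases hk : k = 0 <;> simp [hk] <;> ring
  rw [hif]
  have main : A * (2 * (Nat.factorial k : ℝ)^2 * t^(2*k+1) / (Nat.factorial (2*k+1)))
      + B * 0
      + C * (t^2 * (2 * (Nat.factorial k : ℝ)^2 * t^(2*k+1) / (Nat.factorial (2*k+1)))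
        - 4 * (2 * (Nat.factorial (k+1) : ℝ)^2 * t^(2*(k+1)+1) / (Nat.factorial (2*(k+1)+1))))
      = (-1:ℝ)^(k+1) * t^(2*k+1)/(Nat.factorial (2*k+1))
        + t^(2*k+2)/(Nat.factorial (2*k+2))
        + (1+(-1:ℝ)^(k+1)) * t^(2*k+3)/(Nat.factorial (2*k+3)) := by
    clear hfe
    have e1 : (Nat.factorial (k+1) : ℝ) = (k+1) * Nat.factorial k := by
      rw [Nat.factorial_succ]; push_cast; ring
    have e2 : (Nat.factorial (k+2) : ℝ) = (k+2) * ((k+1) * Nat.factorial k) := by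
      rw [show k+2 = (k+1)+1 from rfl, Nat.factorial_succ, ← e1, Nat.factorial_succ]; push_cast; ring
    have e3 : (Nat.factorial (2*k+2) : ℝ) = (2*k+2) * Nat.factorial (2*k+1) := by
      rw [show 2*k+2 = (2*k+1)+1 from rfl, Nat.factorial_succ]; push_cast; ring
    have e4 : (Nat.factorial (2*k+3) : ℝ) = (2*k+3) * ((2*k+2) * Nat.factorial (2*k+1)) := by
      rw [show 2*k+3 = (2*k+2)+1 from rfl, Nat.factorial_succ, ← e3]; push_cast; ring
    have e5 : 2*(k+1)+1 = 2*k+3 := by ring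
    rw [hA, hB, hC, e5, e1, e2, e3, e4]
    have h1 : (Nat.factorial k : ℝ) ≠ 0 := by positivity
    have h2 : (Nat.factorial (2*k+1) : ℝ) ≠ 0 := by positivity
    have h3 : ((k:ℝ)+1) ≠ 0 := by positivity
    have h4 : ((k:ℝ)+2) ≠ 0 := by positivity
    have h5 : (2*(k:ℝ)+1) ≠ 0 := by positivity
    have h6 : (2*(k:ℝ)+2) ≠ 0 := by positivity
    have h7 : (2*(k:ℝ)+3) ≠ 0 := by positivity
    simp only [pow_succ]
    push_cast
    field_simp
    ring
  linear_combination main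


lemma Qf_cont (t : ℝ) (k : ℕ) : Continuous fun y : ℝ => Qf t k y := by
  unfold Qf qcoef
  fun_prop

lemma Qf_bound (t : ℝ) (ht : 0 < t) (k : ℕ) (y : ℝ) (hy : y ∈ Set.Ioo (-t) t) :
    ‖Qf t k y‖ ≤ (if k = 0 then (1/2:ℝ) else 0) + (2*(1+t+t^2)) * ((t^2/4)^k / (Nat.factorial k)) := by
  have hy' : |y| ≤ t := (abs_lt.mpr ⟨hy.1, hy.2⟩).le
  have hv : (0:ℝ) ≤ (t^2-y^2)/4 := by
    have := abs_le.mp hy'; nlinarith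
  have hvle : (t^2-y^2)/4 ≤ t^2/4 := by nlinarith [sq_nonneg y]
  have h1 : ‖Qf t k y‖ ≤ ‖(if k = 0 then (1/2:ℝ) else 0)‖ + ‖qcoef t k y * ((t^2-y^2)/4)^k‖ :=
    norm_add_le _ _
  have h2 : ‖(if k = 0 then (1/2:ℝ) else 0)‖ = (if k = 0 then (1/2:ℝ) else 0) := by
    split <;> simp
  have h3 : ‖qcoef t k y * ((t^2-y^2)/4)^k‖ ≤ (2*(1+t+t^2)) * ((t^2/4)^k / (Nat.factorial k)) := by
    rw [norm_mul, norm_pow, Real.norm_eq_abs, Real.norm_eq_abs, abs_of_nonneg hv]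
    calc |qcoef t k y| * ((t^2-y^2)/4)^k
        ≤ ((2*(1+t+t^2)) / (Nat.factorial k)) * (t^2/4)^k := by
          apply mul_le_mul (qcoef_bound t k y hy') (pow_le_pow_left₀ hv hvle k)
            (by positivity) (by positivity)
      _ = (2*(1+t+t^2)) * ((t^2/4)^k / (Nat.factorial k)) := by ring
  calc ‖Qf t k y‖ ≤ ‖(if k = 0 then (1/2:ℝ) else 0)‖ + ‖qcoef t k y * ((t^2-y^2)/4)^k‖ := h1
    _ ≤ (if k = 0 then (1/2:ℝ) else 0) + (2*(1+t+t^2)) * ((t^2/4)^k / (Nat.factorial k)) := by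
        rw [h2]; exact add_le_add_right h3 _

theorem erlang2_gc_mass' (t : ℝ) (ht : 0 < t) :
    (∫ y in (-t)..t, (fun y : ℝ =>
      -besselJ0 (Real.sqrt (t ^ 2 - y ^ 2)) / 2 +
        (t + y) / (2 * Real.sqrt (t ^ 2 - y ^ 2)) * besselI1 (Real.sqrt (t ^ 2 - y ^ 2)) -
        y ^ 2 / (2 * (t ^ 2 - y ^ 2) ^ ((3 : ℝ) / 2)) *
          (besselI1 (Real.sqrt (t ^ 2 - y ^ 2)) + besselJ1 (Real.sqrt (t ^ 2 - y ^ 2))) +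
        t ^ 2 / (4 * (t ^ 2 - y ^ 2)) *
          (besselI0 (Real.sqrt (t ^ 2 - y ^ 2)) + besselI2 (Real.sqrt (t ^ 2 - y ^ 2)) +
            besselJ0 (Real.sqrt (t ^ 2 - y ^ 2)) - besselJ2 (Real.sqrt (t ^ 2 - y ^ 2)))) y)
    = Real.exp t - 1 - t := by
  have hle : -t ≤ t := by linarith
  set D : ℕ → ℝ := fun k =>
    (if k = 0 then (1/2:ℝ) else 0) + (2*(1+t+t^2)) * ((t^2/4)^k / (Nat.factorial k)) with hD
  have hDnn : ∀ k, 0 ≤ D k := by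
    intro k
    apply add_nonneg
    · split <;> norm_num
    · positivity
  have hDsum : Summable D := by
    apply Summable.add
    · exact summable_of_ne_finset_zero (s := {0}) (fun k hk => by simp at hk; simp [hk])
    · exact (Real.summable_pow_div_factorial (t^2/4)).mul_left _
  rw [intervalIntegral.integral_of_le hle, MeasureTheory.integral_Ioc_eq_integral_Ioo]
  rw [MeasureTheory.setIntegral_congr_fun measurableSet_Ioo
    (fun y hy => pointwise_id t y hy)]
  rw [MeasureTheory.integral_tsum
    (fun k => ((Qf_cont t k).aestronglyMeasurable))
    ?_]
  · have heval : ∀ k : ℕ, (∫ y in Set.Ioo (-t) t, Qf t k y)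
        = (if k = 0 then t else 0)
          + (-1:ℝ)^(k+1) * t^(2*k+1)/(Nat.factorial (2*k+1))
          + t^(2*k+2)/(Nat.factorial (2*k+2))
          + (1+(-1:ℝ)^(k+1)) * t^(2*k+3)/(Nat.factorial (2*k+3)) := by
      intro k
      rw [← MeasureTheory.integral_Ioc_eq_integral_Ioo, ← intervalIntegral.integral_of_le hle]
      exact intQ t k
    rw [tsum_congr heval]
    exact (sumVal t).tsum_eq
  · have key : ∀ k : ℕ, (∫⁻ y in Set.Ioo (-t) t, ‖Qf t k y‖₊)
        ≤ ENNReal.ofReal (D k) * ENNReal.ofReal (2*t) := by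
      intro k
      calc (∫⁻ y in Set.Ioo (-t) t, ‖Qf t k y‖₊)
          ≤ ∫⁻ _ in Set.Ioo (-t) t, ENNReal.ofReal (D k) := by
            apply MeasureTheory.setLIntegral_mono measurable_const
            intro y hy
            rw [← enorm_eq_nnnorm, ← ofReal_norm]
            exact ENNReal.ofReal_le_ofReal (Qf_bound t ht k y hy)
        _ = ENNReal.ofReal (D k) * MeasureTheory.volume (Set.Ioo (-t) t) :=
            MeasureTheory.setLIntegral_const _ _
        _ = ENNReal.ofReal (D k) * ENNReal.ofReal (2*t) := by
            rw [Real.volume_Ioo]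
            congr 1
            ring
    apply ne_top_of_le_ne_top ?_ (ENNReal.tsum_le_tsum key)
    rw [ENNReal.tsum_mul_right, ← ENNReal.ofReal_tsum_of_nonneg hDnn hDsum]
    exact ENNReal.mul_ne_top ENNReal.ofReal_ne_top ENNReal.ofReal_ne_top

end ErlangAux

/-- Normalization of the continuous part of the 2-Erlang telegraph density:
`∫₋ₜᵗ g_c(t,y) dy = eᵗ − 1 − t`. -/
theorem erlang2_gc_mass (t : ℝ) (ht : 0 < t) :
    (∫ y in (-t)..t, (fun y : ℝ =>
      -besselJ0 (Real.sqrt (t ^ 2 - y ^ 2)) / 2 +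
        (t + y) / (2 * Real.sqrt (t ^ 2 - y ^ 2)) * besselI1 (Real.sqrt (t ^ 2 - y ^ 2)) -
        y ^ 2 / (2 * (t ^ 2 - y ^ 2) ^ ((3 : ℝ) / 2)) *
          (besselI1 (Real.sqrt (t ^ 2 - y ^ 2)) + besselJ1 (Real.sqrt (t ^ 2 - y ^ 2))) +
        t ^ 2 / (4 * (t ^ 2 - y ^ 2)) *
          (besselI0 (Real.sqrt (t ^ 2 - y ^ 2)) + besselI2 (Real.sqrt (t ^ 2 - y ^ 2)) +
            besselJ0 (Real.sqrt (t ^ 2 - y ^ 2)) - besselJ2 (Real.sqrt (t ^ 2 - y ^ 2)))) y) = Real.exp t - 1 - t := by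
  exact erlang2_gc_mass' t ht
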